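/- arXiv:1503.04279 — 3 statements merged into one kernel-verified Lean document; each statement's English description precedes it below -/
import Mathlib

section
/- Let g be a Lie algebra over a field with a B-orthogonal decomposition g = k ⊕ m₁ ⊕ m₂ ⊕ m₃ where k is a subalgebra, [k, mᵢ] ⊆ mᵢ, [mᵢ, mᵢ] ⊆ k, and the Killing form B is nondegenerate. Then [m₁, m₃] ⊆ m₂ and [m₂, m₃] ⊆ m₁. -/
private lemma wallach_aux {K V : Type*} [Field K] [AddCommGroup V] [Module K V]
    (B : LinearMap.BilinForm K V) (hsymm : ∀ x y, B x y = B y x) (hnd : B.Nondegenerate)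
    (p0 p1 p2 p3 : Submodule K V)
    (hspan : p0 ⊔ p1 ⊔ p2 ⊔ p3 = ⊤)
    (h01 : ∀ x ∈ p0, ∀ y ∈ p1, B x y = 0)
    (h02 : ∀ x ∈ p0, ∀ y ∈ p2, B x y = 0)
    (h03 : ∀ x ∈ p0, ∀ y ∈ p3, B x y = 0)
    (h12 : ∀ x ∈ p1, ∀ y ∈ p2, B x y = 0)
    (h13 : ∀ x ∈ p1, ∀ y ∈ p3, B x y = 0)
    (h23 : ∀ x ∈ p2, ∀ y ∈ p3, B x y = 0)
    (w : V)
    (hw0 : ∀ z ∈ p0, B w z = 0) (hw1 : ∀ z ∈ p1, B w z = 0)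
    (hw3 : ∀ z ∈ p3, B w z = 0) : w ∈ p2 := by
  have decomp : ∀ v : V, ∃ a ∈ p0, ∃ b ∈ p1, ∃ c ∈ p2, ∃ d ∈ p3, v = a + b + c + d := by
    intro v
    have hv : v ∈ p0 ⊔ p1 ⊔ p2 ⊔ p3 := hspan ▸ Submodule.mem_top
    obtain ⟨u, hu, d, hd, rfl⟩ := Submodule.mem_sup.mp hv
    obtain ⟨u', hu', c, hc, rfl⟩ := Submodule.mem_sup.mp hu
    obtain ⟨a, ha, b, hb, rfl⟩ := Submodule.mem_sup.mp hu'
    exact ⟨a, ha, b, hb, c, hc, d, hd, rfl⟩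
  have key : ∀ v : V, (∀ z ∈ p0, B v z = 0) → (∀ z ∈ p1, B v z = 0) →
      (∀ z ∈ p2, B v z = 0) → (∀ z ∈ p3, B v z = 0) → v = 0 := by
    intro v hv0 hv1 hv2 hv3
    apply hnd.1 v
    intro y
    obtain ⟨a, ha, b, hb, c, hc, d, hd, rfl⟩ := decomp y
    simp [hv0 a ha, hv1 b hb, hv2 c hc, hv3 d hd]
  obtain ⟨a, ha, b, hb, c, hc, d, hd, hw⟩ := decomp w
  have expand : ∀ z : V, B w z = B a z + B b z + B c z + B d z := by
    intro z; rw [hw]; simp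
  have ha0 : a = 0 := by
    refine key a (fun z hz => ?_) (fun z hz => h01 a ha z hz)
      (fun z hz => h02 a ha z hz) (fun z hz => h03 a ha z hz)
    have h := hw0 z hz
    rw [expand z] at h
    have hbz : B b z = 0 := (hsymm b z).trans (h01 z hz b hb)
    have hcz : B c z = 0 := (hsymm c z).trans (h02 z hz c hc)
    have hdz : B d z = 0 := (hsymm d z).trans (h03 z hz d hd)
    simpa [hbz, hcz, hdz] using h
  have hb0 : b = 0 := by
    refine key b (fun z hz => (hsymm b z).trans (h01 z hz b hb)) (fun z hz => ?_)
      (fun z hz => h12 b hb z hz) (fun z hz => h13 b hb z hz)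
    have h := hw1 z hz
    rw [expand z] at h
    have haz : B a z = 0 := h01 a ha z hz
    have hcz : B c z = 0 := (hsymm c z).trans (h12 z hz c hc)
    have hdz : B d z = 0 := (hsymm d z).trans (h13 z hz d hd)
    simpa [haz, hcz, hdz] using h
  have hd0 : d = 0 := by
    refine key d (fun z hz => (hsymm d z).trans (h03 z hz d hd))
      (fun z hz => (hsymm d z).trans (h13 z hz d hd))
      (fun z hz => (hsymm d z).trans (h23 z hz d hd)) (fun z hz => ?_)
    have h := hw3 z hz
    rw [expand z] at h
    have haz : B a z = 0 := h03 a ha z hz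
    have hbz : B b z = 0 := h13 b hb z hz
    have hcz : B c z = 0 := h23 c hc z hz
    simpa [haz, hbz, hcz] using h
  rw [hw, ha0, hb0, hd0]
  simpa using hc

/-- In a finite-dimensional Lie algebra `g` over a char-zero field with nondegenerate
Killing form `B`, given a decomposition `g = k ⊕ m₁ ⊕ m₂ ⊕ m₃` into pairwise
`B`-orthogonal subspaces with `k` a subalgebra, `[k, mᵢ] ⊆ mᵢ` and `[mᵢ, mᵢ] ⊆ k`,
we have `[m₁, m₃] ⊆ m₂` and `[m₂, m₃] ⊆ m₁`. -/
theorem wallach_bracket_m1_m3_m2_m3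
    {K : Type*} [Field K] [CharZero K]
    {g : Type*} [LieRing g] [LieAlgebra K g] [Module.Finite K g]
    (k m1 m2 m3 : Submodule K g)
    (hindep : iSupIndep ![k, m1, m2, m3])
    (hspan : k ⊔ m1 ⊔ m2 ⊔ m3 = ⊤)
    (hsub : ∀ x ∈ k, ∀ y ∈ k, ⁅x, y⁆ ∈ k)
    (hk1 : ∀ x ∈ k, ∀ y ∈ m1, ⁅x, y⁆ ∈ m1)
    (hk2 : ∀ x ∈ k, ∀ y ∈ m2, ⁅x, y⁆ ∈ m2)
    (hk3 : ∀ x ∈ k, ∀ y ∈ m3, ⁅x, y⁆ ∈ m3)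
    (h11 : ∀ x ∈ m1, ∀ y ∈ m1, ⁅x, y⁆ ∈ k)
    (h22 : ∀ x ∈ m2, ∀ y ∈ m2, ⁅x, y⁆ ∈ k)
    (h33 : ∀ x ∈ m3, ∀ y ∈ m3, ⁅x, y⁆ ∈ k)
    (horth : ∀ i j : Fin 4, i ≠ j →
      ∀ x ∈ (![k, m1, m2, m3] i), ∀ y ∈ (![k, m1, m2, m3] j), killingForm K g x y = 0)
    (hnd : (killingForm K g).Nondegenerate) :
    (∀ x ∈ m1, ∀ y ∈ m3, ⁅x, y⁆ ∈ m2) ∧ (∀ x ∈ m2, ∀ y ∈ m3, ⁅x, y⁆ ∈ m1) := by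
  set B := killingForm K g with hB
  have hsymm : ∀ x y : g, B x y = B y x := LieModule.traceForm_comm K g g
  have hinv : ∀ x y z : g, B ⁅x, y⁆ z = B x ⁅y, z⁆ :=
    LieModule.traceForm_apply_lie_apply K g g
  have H01 : ∀ x ∈ k, ∀ y ∈ m1, B x y = 0 := by simpa using horth 0 1 (by decide)
  have H02 : ∀ x ∈ k, ∀ y ∈ m2, B x y = 0 := by simpa using horth 0 2 (by decide)
  have H03 : ∀ x ∈ k, ∀ y ∈ m3, B x y = 0 := by simpa using horth 0 3 (by decide)
  have H12 : ∀ x ∈ m1, ∀ y ∈ m2, B x y = 0 := by simpa using horth 1 2 (by decide)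
  have H13 : ∀ x ∈ m1, ∀ y ∈ m3, B x y = 0 := by simpa using horth 1 3 (by decide)
  have H23 : ∀ x ∈ m2, ∀ y ∈ m3, B x y = 0 := by simpa using horth 2 3 (by decide)
  constructor
  · intro x hx y hy
    refine wallach_aux B hsymm hnd k m1 m2 m3 hspan H01 H02 H03 H12 H13 H23 ⁅x, y⁆
      (fun z hz => ?_) (fun z hz => ?_) (fun z hz => ?_)
    · have hyz : ⁅y, z⁆ ∈ m3 := by
        rw [← lie_skew]; exact m3.neg_mem (hk3 z hz y hy)
      rw [hinv x y z]; exact H13 x hx _ hyz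
    · have hxz : ⁅x, z⁆ ∈ k := h11 x hx z hz
      have : B ⁅y, x⁆ z = 0 := by
        rw [hinv y x z]; exact (hsymm y _).trans (H03 _ hxz y hy)
      rw [← lie_skew x y]
      simp only [map_neg, LinearMap.neg_apply, this, neg_zero]
    · have hyz : ⁅y, z⁆ ∈ k := h33 y hy z hz
      rw [hinv x y z]; exact (hsymm x _).trans (H01 _ hyz x hx)
  · intro x hx y hy
    have hspan' : k ⊔ m2 ⊔ m1 ⊔ m3 = ⊤ := by rw [sup_right_comm k m2 m1]; exact hspan
    refine wallach_aux B hsymm hnd k m2 m1 m3 hspan' H02 H01 H03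
      (fun a ha b hb => (hsymm a b).trans (H12 b hb a ha)) H23 H13 ⁅x, y⁆
      (fun z hz => ?_) (fun z hz => ?_) (fun z hz => ?_)
    · have hyz : ⁅y, z⁆ ∈ m3 := by
        rw [← lie_skew]; exact m3.neg_mem (hk3 z hz y hy)
      rw [hinv x y z]; exact H23 x hx _ hyz
    · have hxz : ⁅x, z⁆ ∈ k := h22 x hx z hz
      have : B ⁅y, x⁆ z = 0 := by
        rw [hinv y x z]; exact (hsymm y _).trans (H03 _ hxz y hy)
      rw [← lie_skew x y]
      simp only [map_neg, LinearMap.neg_apply, this, neg_zero]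
    · have hyz : ⁅y, z⁆ ∈ k := h33 y hy z hz
      rw [hinv x y z]; exact (hsymm x _).trans (H02 _ hyz x hx)
end

section
/- Let g be a Lie algebra with invariant symmetric bilinear form B (B([X,Y],Z) = B(X,[Y,Z])) and a B-orthogonal generalized Wallach decomposition g = k ⊕ m₁ ⊕ m₂ ⊕ m₃. Define ⟨·,·⟩ = λ₁(−B)|m₁ + λ₂(−B)|m₂ + λ₃(−B)|m₃ on m = m₁⊕m₂⊕m₃. If [m₁, m₂] = 0, then for all X = X₁+X₂+X₃ and W = W₁+W₂+W₃ in m (Xᵢ, Wᵢ ∈ mᵢ), one has ⟨X, pr_m[W, X]⟩ = 0, i.e. ad-skew-symmetry of the metric at X holds, which is the geodesic-orbit condition. -/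
/-- Let `g` be a real Lie algebra with an invariant nondegenerate symmetric
bilinear form `B` and a `B`-orthogonal generalized Wallach decomposition
`g = k ⊕ m₁ ⊕ m₂ ⊕ m₃` satisfying additionally `[m₁, m₂] = 0`.  Equip
`m = m₁ ⊔ m₂ ⊔ m₃` with `⟨·,·⟩ = λ₁(−B)|m₁ + λ₂(−B)|m₂ + λ₃(−B)|m₃`
(encoded by `ip`), and let `pr` be the `B`-orthogonal projection onto `m`.
Then for every `X = X₁+X₂+X₃` and `W = W₁+W₂+W₃` in `m`, one has
`⟨X, pr[W, X]⟩ = 0` (the geodesic-orbit condition). -/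
theorem wallach_go_condition
    {g : Type*} [LieRing g] [LieAlgebra ℝ g]
    (B : LinearMap.BilinForm ℝ g)
    (hBsymm : ∀ x y : g, B x y = B y x)
    (hBinv : ∀ x y z : g, B ⁅x, y⁆ z = B x ⁅y, z⁆)
    (hBnd : B.Nondegenerate)
    (k m1 m2 m3 : Submodule ℝ g)
    (hindep : iSupIndep ![k, m1, m2, m3])
    (hspan : k ⊔ m1 ⊔ m2 ⊔ m3 = ⊤)
    (hsub : ∀ x ∈ k, ∀ y ∈ k, ⁅x, y⁆ ∈ k)
    (hk1 : ∀ x ∈ k, ∀ y ∈ m1, ⁅x, y⁆ ∈ m1)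
    (hk2 : ∀ x ∈ k, ∀ y ∈ m2, ⁅x, y⁆ ∈ m2)
    (hk3 : ∀ x ∈ k, ∀ y ∈ m3, ⁅x, y⁆ ∈ m3)
    (h11 : ∀ x ∈ m1, ∀ y ∈ m1, ⁅x, y⁆ ∈ k)
    (h22 : ∀ x ∈ m2, ∀ y ∈ m2, ⁅x, y⁆ ∈ k)
    (h33 : ∀ x ∈ m3, ∀ y ∈ m3, ⁅x, y⁆ ∈ k)
    (h12 : ∀ x ∈ m1, ∀ y ∈ m2, ⁅x, y⁆ = 0)
    (h13 : ∀ x ∈ m1, ∀ y ∈ m3, ⁅x, y⁆ ∈ m2)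
    (h23 : ∀ x ∈ m2, ∀ y ∈ m3, ⁅x, y⁆ ∈ m1)
    (horth : ∀ i j : Fin 4, i ≠ j →
      ∀ x ∈ (![k, m1, m2, m3] i), ∀ y ∈ (![k, m1, m2, m3] j), B x y = 0)
    (lam1 lam2 lam3 : ℝ) (hlam1 : 0 < lam1) (hlam2 : 0 < lam2) (hlam3 : 0 < lam3)
    (ip : LinearMap.BilinForm ℝ g)
    (hip1 : ∀ u ∈ m1, ∀ v ∈ m1, ip u v = lam1 * (-(B u v)))
    (hip2 : ∀ u ∈ m2, ∀ v ∈ m2, ip u v = lam2 * (-(B u v)))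
    (hip3 : ∀ u ∈ m3, ∀ v ∈ m3, ip u v = lam3 * (-(B u v)))
    (hipcross : ∀ i j : Fin 3, i ≠ j →
      ∀ u ∈ (![m1, m2, m3] i), ∀ v ∈ (![m1, m2, m3] j), ip u v = 0)
    (pr : g →ₗ[ℝ] g)
    (hpr_mem : ∀ x : g, pr x ∈ m1 ⊔ m2 ⊔ m3)
    (hpr_fix : ∀ x : g, x - pr x ∈ k)
    (X1 X2 X3 W1 W2 W3 : g)
    (hX1 : X1 ∈ m1) (hX2 : X2 ∈ m2) (hX3 : X3 ∈ m3)
    (hW1 : W1 ∈ m1) (hW2 : W2 ∈ m2) (hW3 : W3 ∈ m3) :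
    ip (X1 + X2 + X3) (pr ⁅W1 + W2 + W3, X1 + X2 + X3⁆) = 0 := by
  -- orthogonality helpers
  have o1k : ∀ x ∈ m1, ∀ y ∈ k, B x y = 0 := horth 1 0 (by decide)
  have o2k : ∀ x ∈ m2, ∀ y ∈ k, B x y = 0 := horth 2 0 (by decide)
  have o3k : ∀ x ∈ m3, ∀ y ∈ k, B x y = 0 := horth 3 0 (by decide)
  have o12 : ∀ x ∈ m1, ∀ y ∈ m2, B x y = 0 := horth 1 2 (by decide)
  have o13 : ∀ x ∈ m1, ∀ y ∈ m3, B x y = 0 := horth 1 3 (by decide)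
  have o21 : ∀ x ∈ m2, ∀ y ∈ m1, B x y = 0 := horth 2 1 (by decide)
  have o23 : ∀ x ∈ m2, ∀ y ∈ m3, B x y = 0 := horth 2 3 (by decide)
  have o31 : ∀ x ∈ m3, ∀ y ∈ m1, B x y = 0 := horth 3 1 (by decide)
  have o32 : ∀ x ∈ m3, ∀ y ∈ m2, B x y = 0 := horth 3 2 (by decide)
  have c12 : ∀ u ∈ m1, ∀ v ∈ m2, ip u v = 0 := hipcross 0 1 (by decide)
  have c13 : ∀ u ∈ m1, ∀ v ∈ m3, ip u v = 0 := hipcross 0 2 (by decide)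
  have c21 : ∀ u ∈ m2, ∀ v ∈ m1, ip u v = 0 := hipcross 1 0 (by decide)
  have c23 : ∀ u ∈ m2, ∀ v ∈ m3, ip u v = 0 := hipcross 1 2 (by decide)
  have c31 : ∀ u ∈ m3, ∀ v ∈ m1, ip u v = 0 := hipcross 2 0 (by decide)
  have c32 : ∀ u ∈ m3, ∀ v ∈ m2, ip u v = 0 := hipcross 2 1 (by decide)
  set Z : g := ⁅W1 + W2 + W3, X1 + X2 + X3⁆ with hZ
  -- vanishing brackets
  have e12 : ⁅W1, X2⁆ = (0:g) := h12 W1 hW1 X2 hX2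
  have e21 : ⁅W2, X1⁆ = (0:g) := by
    rw [← lie_skew, h12 X1 hX1 W2 hW2, neg_zero]
  -- B Xi Z = 0 for each i
  have hBX1Z : B X1 Z = 0 := by
    have t11 : B X1 ⁅W1, X1⁆ = 0 := o1k X1 hX1 _ (h11 W1 hW1 X1 hX1)
    have t13 : B X1 ⁅W1, X3⁆ = 0 := o12 X1 hX1 _ (h13 W1 hW1 X3 hX3)
    have t22 : B X1 ⁅W2, X2⁆ = 0 := o1k X1 hX1 _ (h22 W2 hW2 X2 hX2)
    have t23 : B X1 ⁅W2, X3⁆ = 0 := by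
      rw [← hBinv, h12 X1 hX1 W2 hW2]; simp
    have t31 : B X1 ⁅W3, X1⁆ = 0 := by
      have hm : ⁅W3, X1⁆ ∈ m2 := by
        rw [← lie_skew]; exact m2.neg_mem (h13 X1 hX1 W3 hW3)
      exact o12 X1 hX1 _ hm
    have t32 : B X1 ⁅W3, X2⁆ = 0 := by
      rw [← lie_skew W3 X2, (B X1).map_neg, ← hBinv, h12 X1 hX1 X2 hX2]
      simp
    have t33 : B X1 ⁅W3, X3⁆ = 0 := o1k X1 hX1 _ (h33 W3 hW3 X3 hX3)
    simp [hZ, add_lie, lie_add, e12, e21, t11, t13, t22, t23, t31, t32, t33]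
  have hBX2Z : B X2 Z = 0 := by
    have t11 : B X2 ⁅W1, X1⁆ = 0 := o2k X2 hX2 _ (h11 W1 hW1 X1 hX1)
    have t13 : B X2 ⁅W1, X3⁆ = 0 := by
      rw [← hBinv]
      have : ⁅X2, W1⁆ = (0:g) := by
        rw [← lie_skew, h12 W1 hW1 X2 hX2, neg_zero]
      rw [this]; simp
    have t22 : B X2 ⁅W2, X2⁆ = 0 := o2k X2 hX2 _ (h22 W2 hW2 X2 hX2)
    have t23 : B X2 ⁅W2, X3⁆ = 0 := o21 X2 hX2 _ (h23 W2 hW2 X3 hX3)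
    have t31 : B X2 ⁅W3, X1⁆ = 0 := by
      rw [← lie_skew W3 X1, (B X2).map_neg, ← hBinv]
      have : ⁅X2, X1⁆ = (0:g) := by
        rw [← lie_skew, h12 X1 hX1 X2 hX2, neg_zero]
      rw [this]; simp
    have t32 : B X2 ⁅W3, X2⁆ = 0 := by
      have hm : ⁅W3, X2⁆ ∈ m1 := by
        rw [← lie_skew]; exact m1.neg_mem (h23 X2 hX2 W3 hW3)
      exact o21 X2 hX2 _ hm
    have t33 : B X2 ⁅W3, X3⁆ = 0 := o2k X2 hX2 _ (h33 W3 hW3 X3 hX3)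
    simp [hZ, add_lie, lie_add, e12, e21, t11, t13, t22, t23, t31, t32, t33]
  have hBX3Z : B X3 Z = 0 := by
    have t11 : B X3 ⁅W1, X1⁆ = 0 := o3k X3 hX3 _ (h11 W1 hW1 X1 hX1)
    have t13 : B X3 ⁅W1, X3⁆ = 0 := o32 X3 hX3 _ (h13 W1 hW1 X3 hX3)
    have t22 : B X3 ⁅W2, X2⁆ = 0 := o3k X3 hX3 _ (h22 W2 hW2 X2 hX2)
    have t23 : B X3 ⁅W2, X3⁆ = 0 := o31 X3 hX3 _ (h23 W2 hW2 X3 hX3)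
    have t31 : B X3 ⁅W3, X1⁆ = 0 := by
      have hm : ⁅W3, X1⁆ ∈ m2 := by
        rw [← lie_skew]; exact m2.neg_mem (h13 X1 hX1 W3 hW3)
      exact o32 X3 hX3 _ hm
    have t32 : B X3 ⁅W3, X2⁆ = 0 := by
      have hm : ⁅W3, X2⁆ ∈ m1 := by
        rw [← lie_skew]; exact m1.neg_mem (h23 X2 hX2 W3 hW3)
      exact o31 X3 hX3 _ hm
    have t33 : B X3 ⁅W3, X3⁆ = 0 := o3k X3 hX3 _ (h33 W3 hW3 X3 hX3)
    simp [hZ, add_lie, lie_add, e12, e21, t11, t13, t22, t23, t31, t32, t33]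
  -- decompose pr Z
  obtain ⟨y12, hy12, Z3', hZ3', hsum⟩ := Submodule.mem_sup.mp (hpr_mem Z)
  obtain ⟨Z1', hZ1', Z2', hZ2', hy⟩ := Submodule.mem_sup.mp hy12
  have hdecomp : pr Z = Z1' + Z2' + Z3' := by rw [← hsum, ← hy]
  -- B Xi (pr Z) = 0
  have hB1p : B X1 (pr Z) = 0 := by
    have h' := o1k X1 hX1 _ (hpr_fix Z)
    rw [(B X1).map_sub, hBX1Z] at h'; linarith
  have hB2p : B X2 (pr Z) = 0 := by
    have h' := o2k X2 hX2 _ (hpr_fix Z)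
    rw [(B X2).map_sub, hBX2Z] at h'; linarith
  have hB3p : B X3 (pr Z) = 0 := by
    have h' := o3k X3 hX3 _ (hpr_fix Z)
    rw [(B X3).map_sub, hBX3Z] at h'; linarith
  -- B Xi Zi' = 0
  have hB1Z1 : B X1 Z1' = 0 := by
    have := hB1p
    rw [hdecomp, (B X1).map_add, (B X1).map_add, o12 X1 hX1 Z2' hZ2',
      o13 X1 hX1 Z3' hZ3'] at this
    linarith
  have hB2Z2 : B X2 Z2' = 0 := by
    have := hB2p
    rw [hdecomp, (B X2).map_add, (B X2).map_add, o21 X2 hX2 Z1' hZ1',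
      o23 X2 hX2 Z3' hZ3'] at this
    linarith
  have hB3Z3 : B X3 Z3' = 0 := by
    have := hB3p
    rw [hdecomp, (B X3).map_add, (B X3).map_add, o31 X3 hX3 Z1' hZ1',
      o32 X3 hX3 Z2' hZ2'] at this
    linarith
  rw [hdecomp]
  simp only [map_add, LinearMap.add_apply]
  rw [hip1 X1 hX1 Z1' hZ1', hip2 X2 hX2 Z2' hZ2', hip3 X3 hX3 Z3' hZ3',
    c12 X1 hX1 Z2' hZ2', c13 X1 hX1 Z3' hZ3', c21 X2 hX2 Z1' hZ1',
    c23 X2 hX2 Z3' hZ3', c31 X3 hX3 Z1' hZ1', c32 X3 hX3 Z2' hZ2',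
    hB1Z1, hB2Z2, hB3Z3]
  ring
end

section
/- Let g be a Lie algebra with invariant nondegenerate symmetric bilinear form B and a B-orthogonal generalized Wallach decomposition g = k ⊕ m₁ ⊕ m₂ ⊕ m₃. Fix c ∈ ℝ and equip m = m₁⊕m₂⊕m₃ with ⟨·,·⟩ = (−B)|m₁ + (−B)|m₂ + c(−B)|m₃. Then for all U₁ ∈ m₁, U₂ ∈ m₂, U₃ ∈ m₃ and all W ∈ m: (1−c)·(−B)(W, [U₁,U₃] + [U₂,U₃]) + ⟨pr_m[W,U₁], U₂⟩ + ⟨pr_m[W,U₁], U₃⟩ + ⟨pr_m[W,U₂], U₁⟩ + ⟨pr_m[W,U₂], U₃⟩ + ⟨pr_m[W,U₃], U₁⟩ + ⟨pr_m[W,U₃], U₂⟩ = 0. -/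
/-- Let `g` be a real Lie algebra with an invariant nondegenerate symmetric
bilinear form `B` and a `B`-orthogonal generalized Wallach decomposition
`g = k ⊕ m₁ ⊕ m₂ ⊕ m₃`.  Equip `m = m₁ ⊔ m₂ ⊔ m₃` with the inner product
`⟨·,·⟩ = (−B)|m₁ + (−B)|m₂ + c(−B)|m₃` (encoded by the bilinear form `ip`),
and let `pr` be the `B`-orthogonal projection onto `m` (the projection along
`k`).  Then for all `U₁ ∈ m₁`, `U₂ ∈ m₂`, `U₃ ∈ m₃` and all `W ∈ m`, the
stated combination vanishes. -/
theorem wallach_geodesic_identity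
    {g : Type*} [LieRing g] [LieAlgebra ℝ g]
    (B : LinearMap.BilinForm ℝ g)
    (hBsymm : ∀ x y : g, B x y = B y x)
    (hBinv : ∀ x y z : g, B ⁅x, y⁆ z = B x ⁅y, z⁆)
    (hBnd : B.Nondegenerate)
    (k m1 m2 m3 : Submodule ℝ g)
    (hindep : iSupIndep ![k, m1, m2, m3])
    (hspan : k ⊔ m1 ⊔ m2 ⊔ m3 = ⊤)
    (hsub : ∀ x ∈ k, ∀ y ∈ k, ⁅x, y⁆ ∈ k)
    (hk1 : ∀ x ∈ k, ∀ y ∈ m1, ⁅x, y⁆ ∈ m1)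
    (hk2 : ∀ x ∈ k, ∀ y ∈ m2, ⁅x, y⁆ ∈ m2)
    (hk3 : ∀ x ∈ k, ∀ y ∈ m3, ⁅x, y⁆ ∈ m3)
    (h11 : ∀ x ∈ m1, ∀ y ∈ m1, ⁅x, y⁆ ∈ k)
    (h22 : ∀ x ∈ m2, ∀ y ∈ m2, ⁅x, y⁆ ∈ k)
    (h33 : ∀ x ∈ m3, ∀ y ∈ m3, ⁅x, y⁆ ∈ k)
    (h12 : ∀ x ∈ m1, ∀ y ∈ m2, ⁅x, y⁆ ∈ m3)
    (h13 : ∀ x ∈ m1, ∀ y ∈ m3, ⁅x, y⁆ ∈ m2)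
    (h23 : ∀ x ∈ m2, ∀ y ∈ m3, ⁅x, y⁆ ∈ m1)
    (horth : ∀ i j : Fin 4, i ≠ j →
      ∀ x ∈ (![k, m1, m2, m3] i), ∀ y ∈ (![k, m1, m2, m3] j), B x y = 0)
    (c : ℝ)
    (ip : LinearMap.BilinForm ℝ g)
    (hip1 : ∀ u ∈ m1, ∀ v ∈ m1, ip u v = -(B u v))
    (hip2 : ∀ u ∈ m2, ∀ v ∈ m2, ip u v = -(B u v))
    (hip3 : ∀ u ∈ m3, ∀ v ∈ m3, ip u v = c * (-(B u v)))
    (hipcross : ∀ i j : Fin 3, i ≠ j →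
      ∀ u ∈ (![m1, m2, m3] i), ∀ v ∈ (![m1, m2, m3] j), ip u v = 0)
    (pr : g →ₗ[ℝ] g)
    (hpr_mem : ∀ x : g, pr x ∈ m1 ⊔ m2 ⊔ m3)
    (hpr_fix : ∀ x : g, x - pr x ∈ k)
    (U1 U2 U3 : g) (hU1 : U1 ∈ m1) (hU2 : U2 ∈ m2) (hU3 : U3 ∈ m3)
    (W : g) (hW : W ∈ m1 ⊔ m2 ⊔ m3) :
    (1 - c) * (-(B W (⁅U1, U3⁆ + ⁅U2, U3⁆)))
      + ip (pr ⁅W, U1⁆) U2 + ip (pr ⁅W, U1⁆) U3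
      + ip (pr ⁅W, U2⁆) U1 + ip (pr ⁅W, U2⁆) U3
      + ip (pr ⁅W, U3⁆) U1 + ip (pr ⁅W, U3⁆) U2 = 0 := by
  classical
  -- decompose W
  obtain ⟨y, hy, w3, hw3, hyW⟩ := Submodule.mem_sup.mp hW
  obtain ⟨w1, hw1, w2, hw2, hy2⟩ := Submodule.mem_sup.mp hy
  have hWe : w1 + w2 + w3 = W := by rw [hy2]; exact hyW
  -- disjointness of k and m
  have hle : m1 ⊔ m2 ⊔ m3 ≤ ⨆ j ≠ (0 : Fin 4), ![k, m1, m2, m3] j := by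
    refine sup_le (sup_le ?_ ?_) ?_
    · exact le_iSup₂ (f := fun (j : Fin 4) (_ : j ≠ 0) => ![k, m1, m2, m3] j) 1 (by decide)
    · exact le_iSup₂ (f := fun (j : Fin 4) (_ : j ≠ 0) => ![k, m1, m2, m3] j) 2 (by decide)
    · exact le_iSup₂ (f := fun (j : Fin 4) (_ : j ≠ 0) => ![k, m1, m2, m3] j) 3 (by decide)
  have hdisj : Disjoint k (m1 ⊔ m2 ⊔ m3) := (hindep 0).mono_right hle
  -- projection facts
  have hprk : ∀ x ∈ k, pr x = 0 := by
    intro x hx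
    have h2 : pr x ∈ k := by
      have := k.sub_mem hx (hpr_fix x)
      simpa using this
    have := hdisj.le_bot ⟨h2, hpr_mem x⟩
    simpa using this
  have hprm : ∀ x ∈ m1 ⊔ m2 ⊔ m3, pr x = x := by
    intro x hx
    have h2 : x - pr x ∈ m1 ⊔ m2 ⊔ m3 := Submodule.sub_mem _ hx (hpr_mem x)
    have := hdisj.le_bot ⟨hpr_fix x, h2⟩
    have h3 : x - pr x = 0 := by simpa using this
    linear_combination (norm := module) -h3
  -- reversed bracket memberships
  have h21 : ∀ x ∈ m2, ∀ y ∈ m1, ⁅x, y⁆ ∈ m3 := fun x hx y hy => by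
    rw [← lie_skew]; exact m3.neg_mem (h12 y hy x hx)
  have h31 : ∀ x ∈ m3, ∀ y ∈ m1, ⁅x, y⁆ ∈ m2 := fun x hx y hy => by
    rw [← lie_skew]; exact m2.neg_mem (h13 y hy x hx)
  have h32 : ∀ x ∈ m3, ∀ y ∈ m2, ⁅x, y⁆ ∈ m1 := fun x hx y hy => by
    rw [← lie_skew]; exact m1.neg_mem (h23 y hy x hx)
  have hm1M : m1 ≤ m1 ⊔ m2 ⊔ m3 := le_sup_of_le_left le_sup_left
  have hm2M : m2 ≤ m1 ⊔ m2 ⊔ m3 := le_sup_of_le_left le_sup_right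
  have hm3M : m3 ≤ m1 ⊔ m2 ⊔ m3 := le_sup_right
  -- projections of the brackets
  have p1 : pr ⁅W, U1⁆ = ⁅w2, U1⁆ + ⁅w3, U1⁆ := by
    rw [← hWe, add_lie, add_lie, map_add, map_add,
      hprk _ (h11 w1 hw1 U1 hU1), hprm _ (hm3M (h21 w2 hw2 U1 hU1)),
      hprm _ (hm2M (h31 w3 hw3 U1 hU1)), zero_add]
  have p2 : pr ⁅W, U2⁆ = ⁅w1, U2⁆ + ⁅w3, U2⁆ := by
    rw [← hWe, add_lie, add_lie, map_add, map_add,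
      hprk _ (h22 w2 hw2 U2 hU2), hprm _ (hm3M (h12 w1 hw1 U2 hU2)),
      hprm _ (hm1M (h32 w3 hw3 U2 hU2)), add_zero]
  have p3 : pr ⁅W, U3⁆ = ⁅w1, U3⁆ + ⁅w2, U3⁆ := by
    rw [← hWe, add_lie, add_lie, map_add, map_add,
      hprk _ (h33 w3 hw3 U3 hU3), hprm _ (hm2M (h13 w1 hw1 U3 hU3)),
      hprm _ (hm1M (h23 w2 hw2 U3 hU3)), add_zero]
  -- the seven terms
  have e1 : ip (pr ⁅W, U1⁆) U2 = -(B ⁅w3, U1⁆ U2) := by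
    rw [p1, map_add, LinearMap.add_apply,
      hipcross 2 1 (by decide) _ (h21 w2 hw2 U1 hU1) U2 hU2,
      hip2 _ (h31 w3 hw3 U1 hU1) U2 hU2, zero_add]
  have e2 : ip (pr ⁅W, U1⁆) U3 = c * (-(B ⁅w2, U1⁆ U3)) := by
    rw [p1, map_add, LinearMap.add_apply,
      hipcross 1 2 (by decide) _ (h31 w3 hw3 U1 hU1) U3 hU3,
      hip3 _ (h21 w2 hw2 U1 hU1) U3 hU3, add_zero]
  have e3 : ip (pr ⁅W, U2⁆) U1 = -(B ⁅w3, U2⁆ U1) := by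
    rw [p2, map_add, LinearMap.add_apply,
      hipcross 2 0 (by decide) _ (h12 w1 hw1 U2 hU2) U1 hU1,
      hip1 _ (h32 w3 hw3 U2 hU2) U1 hU1, zero_add]
  have e4 : ip (pr ⁅W, U2⁆) U3 = c * (-(B ⁅w1, U2⁆ U3)) := by
    rw [p2, map_add, LinearMap.add_apply,
      hipcross 0 2 (by decide) _ (h32 w3 hw3 U2 hU2) U3 hU3,
      hip3 _ (h12 w1 hw1 U2 hU2) U3 hU3, add_zero]
  have e5 : ip (pr ⁅W, U3⁆) U1 = -(B ⁅w2, U3⁆ U1) := by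
    rw [p3, map_add, LinearMap.add_apply,
      hipcross 1 0 (by decide) _ (h13 w1 hw1 U3 hU3) U1 hU1,
      hip1 _ (h23 w2 hw2 U3 hU3) U1 hU1, zero_add]
  have e6 : ip (pr ⁅W, U3⁆) U2 = -(B ⁅w1, U3⁆ U2) := by
    rw [p3, map_add, LinearMap.add_apply,
      hipcross 0 1 (by decide) _ (h23 w2 hw2 U3 hU3) U2 hU2,
      hip2 _ (h13 w1 hw1 U3 hU3) U2 hU2, add_zero]
  -- the first term
  have e0 : B W (⁅U1, U3⁆ + ⁅U2, U3⁆) = B ⁅w2, U1⁆ U3 + B ⁅w1, U2⁆ U3 := by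
    rw [← hWe]
    have z1 : B w1 ⁅U1, U3⁆ = 0 := horth 1 2 (by decide) w1 hw1 _ (h13 U1 hU1 U3 hU3)
    have z2 : B w3 ⁅U1, U3⁆ = 0 := horth 3 2 (by decide) w3 hw3 _ (h13 U1 hU1 U3 hU3)
    have z3 : B w2 ⁅U2, U3⁆ = 0 := horth 2 1 (by decide) w2 hw2 _ (h23 U2 hU2 U3 hU3)
    have z4 : B w3 ⁅U2, U3⁆ = 0 := horth 3 1 (by decide) w3 hw3 _ (h23 U2 hU2 U3 hU3)
    have i1 : B ⁅w2, U1⁆ U3 = B w2 ⁅U1, U3⁆ := hBinv w2 U1 U3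
    have i2 : B ⁅w1, U2⁆ U3 = B w1 ⁅U2, U3⁆ := hBinv w1 U2 U3
    simp only [map_add, LinearMap.add_apply]
    rw [i1, i2, z1, z2, z3, z4]; ring
  -- invariance relations
  have r1 : B ⁅w2, U3⁆ U1 = -(B ⁅w2, U1⁆ U3) := by
    rw [hBinv, hBinv, ← lie_skew U1 U3, map_neg, neg_neg]
  have r2 : B ⁅w1, U3⁆ U2 = -(B ⁅w1, U2⁆ U3) := by
    rw [hBinv, hBinv, ← lie_skew U2 U3, map_neg, neg_neg]
  have r3 : B ⁅w3, U2⁆ U1 = -(B ⁅w3, U1⁆ U2) := by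
    rw [hBinv, hBinv, ← lie_skew U1 U2, map_neg, neg_neg]
  rw [e0, e1, e2, e3, e4, e5, e6, r1, r2, r3]
  ring
end
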